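/- For h ∈ H(T), the pointwise limit A^∞ h := lim_n Aⁿ h satisfies (Aⁿh)* ∘ i ≤ A^∞ h ≤ Aⁿ h for every n ≥ 1, and dom(A^∞ h) = dom(h) ∩ dom(h* ∘ i). -/

import Mathlib

open NormedSpace

noncomputable section

/-- Convexity for extended-real-valued functions. -/
def EConvexOn {E : Type*} [AddCommMonoid E] [Module ℝ E] (f : E → EReal) : Prop :=
  ∀ x y : E, ∀ a b : ℝ, 0 ≤ a → 0 ≤ b → a + b = 1 →
    f (a • x + b • y) ≤ (a : EReal) * f x + (b : EReal) * f y

/-- Properness: somewhere finite and never `⊥` (i.e. values in `ℝ ∪ {+∞}`). -/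
def EProper {E : Type*} (f : E → EReal) : Prop :=
  (∃ x, f x ≠ ⊤) ∧ ∀ x, f x ≠ ⊥

variable {X : Type*} [NormedAddCommGroup X] [NormedSpace ℝ X]

/-- The ε-subdifferential of `f : X → ℝ ∪ {+∞}` at `x`. -/
def epsSubdiff (f : X → EReal) (ε : ℝ) (x : X) : Set (StrongDual ℝ X) :=
  {p | f x ≠ ⊤ ∧ ∀ y : X, f x + ((p (y - x) : ℝ) : EReal) ≤ f y + (ε : EReal)}

/-- The Fenchel conjugate of `f : X → ℝ ∪ {+∞}`. -/
def fconj (f : X → EReal) (p : StrongDual ℝ X) : EReal :=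
  ⨆ y : X, ((p y : ℝ) : EReal) - f y

/-- The duality pairing `⟨x, x*⟩` on `X × X*`. -/
def pairing (z : X × StrongDual ℝ X) : ℝ := z.2 z.1

/-- `h* ∘ i`, the conjugate of `h : X × X* → ℝ ∪ {+∞}` with respect to the pairing
`⟨(x,x*),(y*,y)⟩ = ⟨x,y*⟩ + ⟨y,x*⟩`, composed with the swap `i(x,x*) = (x*,x)`. -/
def conjI (h : X × StrongDual ℝ X → EReal) (z : X × StrongDual ℝ X) : EReal :=
  ⨆ w : X × StrongDual ℝ X, ((z.2 w.1 + w.2 z.1 : ℝ) : EReal) - h w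

/-- The averaging map `A h := (1/2)(h + h* ∘ i)`. -/
def Amap (h : X × StrongDual ℝ X → EReal) : X × StrongDual ℝ X → EReal :=
  fun z => (((1 : ℝ)/2 : ℝ) : EReal) * (h z + conjI h z)

/-- Monotone multivalued operator `T : X ⇉ X*`. -/
def IsMonotoneOp (T : X → Set (StrongDual ℝ X)) : Prop :=
  ∀ ⦃x p y q⦄, p ∈ T x → q ∈ T y → 0 ≤ (p - q) (x - y)

/-- Maximally monotone operator. -/
def IsMaxMonotoneOp (T : X → Set (StrongDual ℝ X)) : Prop :=
  IsMonotoneOp T ∧ ∀ x p, (∀ y q, q ∈ T y → 0 ≤ (p - q) (x - y)) → p ∈ T x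

/-- The Fitzpatrick family `H(T)`: lsc convex `h ≥ ⟨·,·⟩` with equality on `gph T`. -/
def InFitzFamily (T : X → Set (StrongDual ℝ X)) (h : X × StrongDual ℝ X → EReal) : Prop :=
  LowerSemicontinuous h ∧ EConvexOn h ∧ (∀ z, (pairing z : EReal) ≤ h z) ∧
    ∀ x p, p ∈ T x → h (x, p) = (pairing (x, p) : EReal)

/-- The δ-subdifferential of `h : X × X* → ℝ ∪ {+∞}` with respect to the pairing
`⟨(x,x*),(y*,y)⟩ = ⟨x,y*⟩ + ⟨y,x*⟩`. -/
def epsSubdiff2 (h : X × StrongDual ℝ X → EReal) (δ : ℝ) (z : X × StrongDual ℝ X) :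
    Set (StrongDual ℝ X × X) :=
  {w | h z ≠ ⊤ ∧ ∀ u : X × StrongDual ℝ X,
    h z + ((w.1 (u.1 - z.1) + (u.2 - z.2) w.2 : ℝ) : EReal) ≤ h u + (δ : EReal)}

/-- The Fenchel–Young function `f^{FY}(x,x*) = f(x) + f*(x*)`. -/
def FYfn (f : X → EReal) (z : X × StrongDual ℝ X) : EReal := f z.1 + fconj f z.2

/-- The pointwise limit `A^∞ h` of the non-increasing sequence `{Aⁿh}_{n ≥ 1}`,
realized as a pointwise infimum. -/
def AinfMap (h : X × StrongDual ℝ X → EReal) (z : X × StrongDual ℝ X) : EReal :=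
  ⨅ n : ℕ, Amap^[n + 1] h z

namespace St11

lemma half_pos' : (0:EReal) < (((1:ℝ)/2 : ℝ) : EReal) := by
  exact_mod_cast (by norm_num : (0:ℝ) < 1/2)

lemma half_mono {a b : EReal} (h : a ≤ b) :
    (((1:ℝ)/2:ℝ) : EReal) * a ≤ (((1:ℝ)/2:ℝ):EReal) * b :=
  mul_le_mul_of_nonneg_left h half_pos'.le

lemma term_le_conjI (g : X × StrongDual ℝ X → EReal) (z w : X × StrongDual ℝ X) :
    ((z.2 w.1 + w.2 z.1 : ℝ) : EReal) - g w ≤ conjI g z :=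
  le_iSup (fun w => ((z.2 w.1 + w.2 z.1 : ℝ) : EReal) - g w) w

lemma half_add_split {a b : EReal} (ha : a ≠ ⊥) (hb : b ≠ ⊥) :
    (((1:ℝ)/2:ℝ) : EReal) * (a + b)
      = (((1:ℝ)/2:ℝ) : EReal) * a + (((1:ℝ)/2:ℝ) : EReal) * b := by
  induction a with
  | bot => simp at ha
  | coe a =>
    induction b with
    | bot => simp at hb
    | coe b => norm_cast; ring
    | top =>
      rw [EReal.add_top_of_ne_bot (EReal.coe_ne_bot a), EReal.mul_top_of_pos half_pos',
        EReal.add_top_of_ne_bot]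
      rw [← EReal.coe_mul]; exact EReal.coe_ne_bot _
  | top =>
    induction b with
    | bot => simp at hb
    | coe b =>
      rw [EReal.top_add_coe, EReal.mul_top_of_pos half_pos', EReal.top_add_of_ne_bot]
      rw [← EReal.coe_mul]; exact EReal.coe_ne_bot _
    | top =>
      rw [EReal.top_add_top, EReal.mul_top_of_pos half_pos', EReal.top_add_top]

lemma ecases (x : EReal) : x = ⊥ ∨ (∃ r : ℝ, x = (r : EReal)) ∨ x = ⊤ := by
  induction x with
  | bot => exact Or.inl rfl
  | coe r => exact Or.inr (Or.inl ⟨r, rfl⟩)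
  | top => exact Or.inr (Or.inr rfl)

lemma ne_bot_of_coe_le {r : ℝ} {x : EReal} (h : (r : EReal) ≤ x) : x ≠ ⊥ :=
  ((EReal.bot_lt_coe r).trans_le h).ne'

lemma half_add_self {x : EReal} (hx : x ≠ ⊥) :
    (((1:ℝ)/2:ℝ) : EReal) * (x + x) = x := by
  rcases ecases x with rfl | ⟨r, rfl⟩ | rfl
  · simp at hx
  · rw [← EReal.coe_add, ← EReal.coe_mul]; norm_cast; ring
  · rw [EReal.top_add_top, EReal.mul_top_of_pos half_pos']

lemma half_eq_top_iff {x : EReal} : (((1:ℝ)/2:ℝ) : EReal) * x = ⊤ ↔ x = ⊤ := by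
  rcases ecases x with rfl | ⟨r, rfl⟩ | rfl
  · rw [EReal.mul_bot_of_pos half_pos']
  · rw [← EReal.coe_mul]
    exact iff_of_false (EReal.coe_ne_top _) (EReal.coe_ne_top _)
  · rw [EReal.mul_top_of_pos half_pos']

lemma add_ne_bot' {x y : EReal} (hx : x ≠ ⊥) (hy : y ≠ ⊥) : x + y ≠ ⊥ := by
  rcases ecases x with rfl | ⟨r, rfl⟩ | rfl
  · simp at hx
  · rcases ecases y with rfl | ⟨s, rfl⟩ | rfl
    · simp at hy
    · rw [← EReal.coe_add]; exact EReal.coe_ne_bot _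
    · rw [EReal.coe_add_top]; simp
  · rw [EReal.top_add_of_ne_bot hy]; simp

lemma add_ne_top_left {x y : EReal} (hy : y ≠ ⊥) (hxy : x + y ≠ ⊤) : x ≠ ⊤ := by
  rintro rfl
  exact hxy (EReal.top_add_of_ne_bot hy)

lemma add_ne_top_right {x y : EReal} (hx : x ≠ ⊥) (hxy : x + y ≠ ⊤) : y ≠ ⊤ := by
  rintro rfl
  exact hxy (EReal.add_top_of_ne_bot hx)

lemma comb_pairing (x y w : X × StrongDual ℝ X) (a b : ℝ) :
    ((a • x + b • y).2 w.1 + w.2 (a • x + b • y).1 : ℝ)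
      = a * (x.2 w.1 + w.2 x.1) + b * (y.2 w.1 + w.2 y.1) := by
  simp only [Prod.fst_add, Prod.snd_add, Prod.smul_fst, Prod.smul_snd,
    ContinuousLinearMap.add_apply, ContinuousLinearMap.coe_smul', Pi.smul_apply,
    map_add, map_smul, smul_eq_mul]
  ring

lemma econvex_conjI (g : X × StrongDual ℝ X → EReal) : EConvexOn (conjI g) := by
  intro x y a b ha hb hab
  refine iSup_le fun w => ?_
  rw [comb_pairing x y w a b]
  rcases ecases (g w) with hgw | ⟨r, hgw⟩ | hgw
  · rw [hgw, EReal.coe_sub_bot]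
    -- LHS = ⊤ : need ⊤ ≤ a * conjI g x + b * conjI g y
    have hx : conjI g x = ⊤ := top_le_iff.1 (by
      rw [← EReal.coe_sub_bot (x.2 w.1 + w.2 x.1), ← hgw]
      exact term_le_conjI g x w)
    have hy : conjI g y = ⊤ := top_le_iff.1 (by
      rw [← EReal.coe_sub_bot (y.2 w.1 + w.2 y.1), ← hgw]
      exact term_le_conjI g y w)
    rcases eq_or_lt_of_le ha with ha0 | ha0
    · have hb1 : b = 1 := by linarith
      rw [← ha0, hb1, hx, hy]
      simp [EReal.zero_mul, EReal.one_mul, EReal.mul_top_of_pos]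
    · rw [hx, EReal.mul_top_of_pos (by exact_mod_cast ha0)]
      rw [EReal.top_add_of_ne_bot]
      rcases eq_or_lt_of_le hb with hb0 | hb0
      · rw [← hb0, hy]; simp
      · rw [hy, EReal.mul_top_of_pos (by exact_mod_cast hb0)]; simp
  · rw [hgw]
    have key : ((a * (x.2 w.1 + w.2 x.1) + b * (y.2 w.1 + w.2 y.1) : ℝ) : EReal) - (r : EReal)
        = (a : EReal) * ((x.2 w.1 + w.2 x.1 - r : ℝ) : EReal)
          + (b : EReal) * ((y.2 w.1 + w.2 y.1 - r : ℝ) : EReal) := by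
      norm_cast; rw [show b = 1 - a from by linarith]; ring
    rw [key]
    refine add_le_add (mul_le_mul_of_nonneg_left ?_ (by exact_mod_cast ha))
      (mul_le_mul_of_nonneg_left ?_ (by exact_mod_cast hb))
    · have := term_le_conjI g x w
      rw [hgw] at this
      exact le_trans (le_of_eq (by norm_cast)) this
    · have := term_le_conjI g y w
      rw [hgw] at this
      exact le_trans (le_of_eq (by norm_cast)) this
  · rw [hgw, EReal.sub_top]
    exact bot_le

lemma exists_real {x : EReal} (h1 : x ≠ ⊥) (h2 : x ≠ ⊤) : ∃ r : ℝ, x = (r : EReal) := by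
  rcases ecases x with h | h | h
  · exact absurd h h1
  · exact h
  · exact absurd h h2

lemma coe_mul_ne_bot {c : ℝ} (hc : 0 < c) {x : EReal} (hx : x ≠ ⊥) : (c : EReal) * x ≠ ⊥ := by
  rcases ecases x with rfl | ⟨r, rfl⟩ | rfl
  · simp at hx
  · rw [← EReal.coe_mul]; exact EReal.coe_ne_bot _
  · rw [EReal.mul_top_of_pos (by exact_mod_cast hc)]; simp

lemma econvex_amap {f k : X × StrongDual ℝ X → EReal} (hf : EConvexOn f) (hk : EConvexOn k)
    (hf' : ∀ z, f z ≠ ⊥) (hk' : ∀ z, k z ≠ ⊥) :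
    EConvexOn (fun z => (((1:ℝ)/2:ℝ) : EReal) * (f z + k z)) := by
  intro x y a b ha hb hab
  simp only
  rcases eq_or_lt_of_le ha with ha0 | ha0
  · have hb1 : b = 1 := by linarith
    rw [← ha0, hb1]
    simp only [EReal.coe_zero, EReal.zero_mul, EReal.coe_one, EReal.one_mul, zero_smul,
      one_smul, zero_add]
    exact le_rfl
  rcases eq_or_lt_of_le hb with hb0 | hb0
  · have ha1 : a = 1 := by linarith
    rw [← hb0, ha1]
    simp only [EReal.coe_zero, EReal.zero_mul, EReal.coe_one, EReal.one_mul, zero_smul,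
      one_smul, add_zero]
    exact le_rfl
  have ha0' : (0 : EReal) < (a : EReal) := by exact_mod_cast ha0
  have hb0' : (0 : EReal) < (b : EReal) := by exact_mod_cast hb0
  -- if any value is ⊤, the RHS is ⊤
  by_cases htop : f x = ⊤ ∨ k x = ⊤ ∨ f y = ⊤ ∨ k y = ⊤
  · have hrhs : (a : EReal) * ((((1:ℝ)/2:ℝ) : EReal) * (f x + k x))
        + (b : EReal) * ((((1:ℝ)/2:ℝ) : EReal) * (f y + k y)) = ⊤ := by
      have hgen : ∀ u v : X × StrongDual ℝ X, ∀ c d : ℝ, 0 < c → 0 < d →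
          (f u = ⊤ ∨ k u = ⊤) →
          (c : EReal) * ((((1:ℝ)/2:ℝ) : EReal) * (f u + k u))
            + (d : EReal) * ((((1:ℝ)/2:ℝ) : EReal) * (f v + k v)) = ⊤ := by
        intro u v c d hc hd huv
        have hsum : f u + k u = ⊤ := by
          rcases huv with h1 | h1
          · rw [h1, EReal.top_add_of_ne_bot (hk' u)]
          · rw [h1, EReal.add_top_of_ne_bot (hf' u)]
        rw [hsum, EReal.mul_top_of_pos half_pos', EReal.mul_top_of_pos (by exact_mod_cast hc)]
        rw [EReal.top_add_of_ne_bot]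
        exact coe_mul_ne_bot hd (coe_mul_ne_bot (by norm_num) (add_ne_bot' (hf' v) (hk' v)))
      rcases htop with h1 | h1 | h1 | h1
      · exact hgen x y a b ha0 hb0 (Or.inl h1)
      · exact hgen x y a b ha0 hb0 (Or.inr h1)
      · rw [add_comm]; exact hgen y x b a hb0 ha0 (Or.inl h1)
      · rw [add_comm]; exact hgen y x b a hb0 ha0 (Or.inr h1)
    rw [hrhs]; exact le_top
  push_neg at htop
  obtain ⟨hfx, hkx, hfy, hky⟩ := htop
  obtain ⟨rfx, hrfx⟩ := exists_real (hf' x) hfx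
  obtain ⟨rkx, hrkx⟩ := exists_real (hk' x) hkx
  obtain ⟨rfy, hrfy⟩ := exists_real (hf' y) hfy
  obtain ⟨rky, hrky⟩ := exists_real (hk' y) hky
  have h1 := hf x y a b ha hb hab
  have h2 := hk x y a b ha hb hab
  rw [hrfx, hrfy] at h1
  rw [hrkx, hrky] at h2
  have h1' : f (a • x + b • y) ≤ ((a * rfx + b * rfy : ℝ) : EReal) := by
    refine le_trans h1 (le_of_eq ?_); norm_cast
  have h2' : k (a • x + b • y) ≤ ((a * rkx + b * rky : ℝ) : EReal) := by
    refine le_trans h2 (le_of_eq ?_); norm_cast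
  calc (((1:ℝ)/2:ℝ) : EReal) * (f (a • x + b • y) + k (a • x + b • y))
      ≤ (((1:ℝ)/2:ℝ) : EReal) * (((a * rfx + b * rfy : ℝ) : EReal)
          + ((a * rkx + b * rky : ℝ) : EReal)) :=
        half_mono (add_le_add h1' h2')
    _ = (a : EReal) * ((((1:ℝ)/2:ℝ) : EReal) * (((rfx : ℝ) : EReal) + ((rkx : ℝ) : EReal)))
          + (b : EReal) * ((((1:ℝ)/2:ℝ) : EReal) * (((rfy : ℝ) : EReal) + ((rky : ℝ) : EReal))) := by
        norm_cast; ring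
    _ = (a : EReal) * ((((1:ℝ)/2:ℝ) : EReal) * (f x + k x))
          + (b : EReal) * ((((1:ℝ)/2:ℝ) : EReal) * (f y + k y)) := by
        rw [hrfx, hrkx, hrfy, hrky]

lemma conjI_ne_bot {g : X × StrongDual ℝ X → EReal} {z₀ : X × StrongDual ℝ X} {r₀ : ℝ}
    (h0 : g z₀ = (r₀ : EReal)) (z : X × StrongDual ℝ X) : conjI g z ≠ ⊥ := by
  have := term_le_conjI g z z₀
  rw [h0, ← EReal.coe_sub] at this
  exact ne_bot_of_coe_le this

lemma biconj_le (g : X × StrongDual ℝ X → EReal) (z : X × StrongDual ℝ X) :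
    conjI (conjI g) z ≤ g z := by
  refine iSup_le fun w => ?_
  have hterm := term_le_conjI g w z
  rw [show (w.2 z.1 + z.2 w.1 : ℝ) = z.2 w.1 + w.2 z.1 from add_comm _ _] at hterm
  rcases ecases (g z) with hgz | ⟨r, hgz⟩ | hgz
  · rw [hgz] at hterm ⊢
    rw [EReal.coe_sub_bot] at hterm
    rw [top_le_iff.1 hterm, EReal.sub_top]
  · rw [hgz] at hterm ⊢
    rw [← EReal.coe_sub] at hterm
    rw [EReal.sub_le_iff_le_add (Or.inr (EReal.coe_ne_top r))
      (Or.inr (EReal.coe_ne_bot r))]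
    calc ((z.2 w.1 + w.2 z.1 : ℝ) : EReal)
        = (r : EReal) + ((z.2 w.1 + w.2 z.1 - r : ℝ) : EReal) := by norm_cast; ring
      _ ≤ (r : EReal) + conjI g w := add_le_add_right hterm _
  · rw [hgz]; exact le_top

lemma conjI_anti {g g' : X × StrongDual ℝ X → EReal} (h : ∀ z, g z ≤ g' z) (z : X × StrongDual ℝ X) :
    conjI g' z ≤ conjI g z := by
  refine iSup_le fun w => le_trans (EReal.sub_le_sub le_rfl (h w)) (term_le_conjI g z w)

lemma conjI_Amap_le {g : X × StrongDual ℝ X → EReal}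
    (hge : ∀ z, (pairing z : EReal) ≤ g z) {z₀ : X × StrongDual ℝ X} {r₀ : ℝ}
    (h0 : g z₀ = (r₀ : EReal)) (z : X × StrongDual ℝ X) :
    conjI (Amap g) z ≤ Amap g z := by
  refine iSup_le fun w => ?_
  have hgw_ne : g w ≠ ⊥ := ne_bot_of_coe_le (hge w)
  have hcw_ne : conjI g w ≠ ⊥ := conjI_ne_bot h0 w
  show ((z.2 w.1 + w.2 z.1 : ℝ) : EReal) - (((1:ℝ)/2:ℝ) : EReal) * (g w + conjI g w)
      ≤ (((1:ℝ)/2:ℝ) : EReal) * (g z + conjI g z)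
  rcases ecases (g w) with hgw | ⟨a, hgw⟩ | hgw
  · exact absurd hgw hgw_ne
  · rcases ecases (conjI g w) with hcw | ⟨b, hcw⟩ | hcw
    · exact absurd hcw hcw_ne
    · rw [hgw, hcw, ← EReal.coe_add, ← EReal.coe_mul, ← EReal.coe_sub]
      have key : ((z.2 w.1 + w.2 z.1 - 1/2 * (a + b) : ℝ) : EReal)
          = (((1:ℝ)/2:ℝ) : EReal) * (((z.2 w.1 + w.2 z.1 - b : ℝ) : EReal)
              + ((z.2 w.1 + w.2 z.1 - a : ℝ) : EReal)) := by
        norm_cast; ring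
      rw [key]
      refine half_mono (add_le_add ?_ ?_)
      · have h2 := term_le_conjI (conjI g) z w
        rw [hcw, ← EReal.coe_sub] at h2
        exact le_trans h2 (biconj_le g z)
      · have := term_le_conjI g z w
        rw [hgw, ← EReal.coe_sub] at this
        exact this
    · rw [hgw, hcw, EReal.add_top_of_ne_bot (EReal.coe_ne_bot a),
        EReal.mul_top_of_pos half_pos', EReal.sub_top]
      exact bot_le
  · rw [hgw, EReal.top_add_of_ne_bot hcw_ne, EReal.mul_top_of_pos half_pos', EReal.sub_top]
    exact bot_le

lemma graph_nonempty {T : X → Set (StrongDual ℝ X)} (hT : IsMaxMonotoneOp T) :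
    ∃ x p, p ∈ T x := by
  by_contra hc
  push_neg at hc
  exact hc 0 0 (hT.2 0 0 fun y q hq => absurd hq (hc y q))

lemma pairing_le_conjI {T : X → Set (StrongDual ℝ X)} (hT : IsMaxMonotoneOp T)
    {g : X × StrongDual ℝ X → EReal}
    (hgph : ∀ x p, p ∈ T x → g (x, p) = (pairing (x, p) : EReal)) (z : X × StrongDual ℝ X) :
    (pairing z : EReal) ≤ conjI g z := by
  by_cases hz : ∀ y q, q ∈ T y → 0 ≤ (z.2 - q) (z.1 - y)
  · have hmem := hT.2 z.1 z.2 hz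
    have h0 := hgph z.1 z.2 hmem
    have hterm := term_le_conjI g z (z.1, z.2)
    rw [h0, ← EReal.coe_sub] at hterm
    refine le_trans (le_of_eq ?_) hterm
    norm_cast
    simp only [pairing]
    ring
  · push_neg at hz
    obtain ⟨y, q, hq, hlt⟩ := hz
    have h0 := hgph y q hq
    have hterm := term_le_conjI g z (y, q)
    rw [h0, ← EReal.coe_sub] at hterm
    refine le_trans ?_ hterm
    rw [EReal.coe_le_coe_iff]
    have hexp : (z.2 - q) (z.1 - y) = z.2 z.1 - z.2 y - q z.1 + q y := by
      simp only [ContinuousLinearMap.sub_apply, map_sub]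
      ring
    rw [hexp] at hlt
    simp only [pairing]
    linarith

lemma conjI_le_on_graph {g : X × StrongDual ℝ X → EReal} (hconv : EConvexOn g)
    (hge : ∀ z, (pairing z : EReal) ≤ g z) {x : X} {p : StrongDual ℝ X}
    (hgr : g (x, p) = (pairing (x, p) : EReal)) :
    conjI g (x, p) ≤ (pairing (x, p) : EReal) := by
  refine iSup_le fun w => ?_
  rcases ecases (g w) with hgw | ⟨r, hgw⟩ | hgw
  · exact absurd hgw (ne_bot_of_coe_le (hge w))
  · rw [hgw, ← EReal.coe_sub, EReal.coe_le_coe_iff]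
    -- real goal : p w.1 + w.2 x - r ≤ p x
    have hr : p w.1 + w.2 x - p x ≤ r := by
      set c₁ : ℝ := p w.1 + w.2 x - p x with hc₁
      set c₂ : ℝ := w.2 w.1 with hc₂
      refine le_of_forall_pos_le_add fun ε hε => ?_
      set t : ℝ := min 1 (ε / (1 + |c₁ - c₂|)) with ht
      have hden : (0:ℝ) < 1 + |c₁ - c₂| := by positivity
      have ht0 : 0 < t := lt_min one_pos (div_pos hε hden)
      have ht1 : t ≤ 1 := min_le_left _ _
      have htε : t * (1 + |c₁ - c₂|) ≤ ε := by
        calc t * (1 + |c₁ - c₂|) ≤ (ε / (1 + |c₁ - c₂|)) * (1 + |c₁ - c₂|) :=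
              mul_le_mul_of_nonneg_right (min_le_right _ _) hden.le
          _ = ε := div_mul_cancel₀ ε hden.ne'
      have hconv1 := hconv (x, p) w (1 - t) t (by linarith) ht0.le (by ring)
      rw [hgr, hgw, ← EReal.coe_mul, ← EReal.coe_mul, ← EReal.coe_add] at hconv1
      have hge1 := hge ((1 - t) • ((x, p) : X × StrongDual ℝ X) + t • w)
      have hpair : pairing ((1 - t) • ((x, p) : X × StrongDual ℝ X) + t • w)
          = (1 - t) ^ 2 * (p x) + (1 - t) * t * (p w.1) + t * (1 - t) * (w.2 x)
            + t ^ 2 * (w.2 w.1) := by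
        simp only [pairing, Prod.fst_add, Prod.snd_add, Prod.smul_fst, Prod.smul_snd,
          ContinuousLinearMap.add_apply, ContinuousLinearMap.coe_smul', Pi.smul_apply,
          map_add, map_smul, smul_eq_mul]
        ring
      have hreal : (1 - t) ^ 2 * (p x) + (1 - t) * t * (p w.1) + t * (1 - t) * (w.2 x)
          + t ^ 2 * (w.2 w.1) ≤ (1 - t) * (pairing (x, p)) + t * r := by
        rw [← EReal.coe_le_coe_iff, ← hpair]
        exact le_trans hge1 hconv1
      have hpxp : pairing (x, p) = p x := rfl
      rw [hpxp] at hreal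
      have habs : c₁ - c₂ ≤ |c₁ - c₂| := le_abs_self _
      -- from hreal : (1-t) * c₁ ≤ r - t * c₂   (after division by t > 0)
      have hdiv : (1 - t) * c₁ + t * c₂ ≤ r := by
        have expand : t * ((1 - t) * c₁ + t * c₂) ≤ t * r := by
          calc t * ((1 - t) * c₁ + t * c₂)
              = (1 - t) ^ 2 * (p x) + (1 - t) * t * (p w.1) + t * (1 - t) * (w.2 x)
                + t ^ 2 * (w.2 w.1) - (1 - t) * (p x) := by
                rw [hc₁, hc₂]; ring
            _ ≤ (1 - t) * (p x) + t * r - (1 - t) * (p x) := by linarith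
            _ = t * r := by ring
        exact le_of_mul_le_mul_left expand ht0
      calc c₁ = (1 - t) * c₁ + t * c₂ + t * (c₁ - c₂) := by ring
        _ ≤ r + t * |c₁ - c₂| := by
            have : t * (c₁ - c₂) ≤ t * |c₁ - c₂| :=
              mul_le_mul_of_nonneg_left habs ht0.le
            linarith
        _ ≤ r + ε := by nlinarith [abs_nonneg (c₁ - c₂)]
    simp only [pairing]
    linarith [hr]
  · rw [hgw, EReal.sub_top]
    exact bot_le

structure Inv (T : X → Set (StrongDual ℝ X)) (g : X × StrongDual ℝ X → EReal) : Prop where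
  conv : EConvexOn g
  ge : ∀ z, (pairing z : EReal) ≤ g z
  gph : ∀ x p, p ∈ T x → g (x, p) = (pairing (x, p) : EReal)

lemma Inv.ne_bot {T : X → Set (StrongDual ℝ X)} {g : X × StrongDual ℝ X → EReal} (hg : Inv T g)
    (z : X × StrongDual ℝ X) : g z ≠ ⊥ := ne_bot_of_coe_le (hg.ge z)

lemma inv_amap {T : X → Set (StrongDual ℝ X)} (hT : IsMaxMonotoneOp T)
    {g : X × StrongDual ℝ X → EReal} (hg : Inv T g) : Inv T (Amap g) := by
  obtain ⟨x₀, p₀, h₀⟩ := graph_nonempty hT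
  have h0 : g (x₀, p₀) = ((pairing (x₀, p₀) : ℝ) : EReal) := hg.gph x₀ p₀ h₀
  have hcne : ∀ z, conjI g z ≠ ⊥ := conjI_ne_bot h0
  refine ⟨?_, ?_, ?_⟩
  · exact econvex_amap hg.conv (econvex_conjI g) hg.ne_bot hcne
  · intro z
    have h1 := hg.ge z
    have h2 := pairing_le_conjI hT hg.gph z
    calc ((pairing z : ℝ) : EReal)
        = (((1:ℝ)/2:ℝ) : EReal) * (((pairing z : ℝ) : EReal) + ((pairing z : ℝ) : EReal)) := by
          rw [← EReal.coe_add, ← EReal.coe_mul]; norm_cast; ring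
      _ ≤ Amap g z := half_mono (add_le_add h1 h2)
  · intro x p hp
    have hc : conjI g (x, p) = ((pairing (x, p) : ℝ) : EReal) :=
      le_antisymm (conjI_le_on_graph hg.conv hg.ge (hg.gph x p hp))
        (pairing_le_conjI hT hg.gph (x, p))
    show (((1:ℝ)/2:ℝ) : EReal) * (g (x, p) + conjI g (x, p)) = _
    rw [hc, hg.gph x p hp, ← EReal.coe_add, ← EReal.coe_mul]
    norm_cast; ring

lemma inv_iter {T : X → Set (StrongDual ℝ X)} (hT : IsMaxMonotoneOp T)
    {h : X × StrongDual ℝ X → EReal} (hh : Inv T h) (n : ℕ) : Inv T (Amap^[n] h) := by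
  induction n with
  | zero => exact hh
  | succ n ih => rw [Function.iterate_succ_apply']; exact inv_amap hT ih

/-- `conjI (Amap^[n+1] h) ≤ Amap^[n+1] h`. -/
lemma conjI_iter_le {T : X → Set (StrongDual ℝ X)} (hT : IsMaxMonotoneOp T)
    {h : X × StrongDual ℝ X → EReal} (hh : Inv T h) (n : ℕ) (z : X × StrongDual ℝ X) :
    conjI (Amap^[n + 1] h) z ≤ Amap^[n + 1] h z := by
  obtain ⟨x₀, p₀, h₀⟩ := graph_nonempty hT
  have hg := inv_iter hT hh n
  rw [Function.iterate_succ_apply']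
  exact conjI_Amap_le hg.ge (hg.gph x₀ p₀ h₀) z

/-- The sequence is non-increasing from index 1 on. -/
lemma iter_decreasing {T : X → Set (StrongDual ℝ X)} (hT : IsMaxMonotoneOp T)
    {h : X × StrongDual ℝ X → EReal} (hh : Inv T h) (n : ℕ) (z : X × StrongDual ℝ X) :
    Amap^[n + 2] h z ≤ Amap^[n + 1] h z := by
  have hg := inv_iter hT hh (n + 1)
  have key := conjI_iter_le hT hh n z
  calc Amap^[n + 2] h z
      = (((1:ℝ)/2:ℝ) : EReal) * (Amap^[n + 1] h z + conjI (Amap^[n + 1] h) z) := by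
        rw [Function.iterate_succ_apply']; rfl
    _ ≤ (((1:ℝ)/2:ℝ) : EReal) * (Amap^[n + 1] h z + Amap^[n + 1] h z) :=
        half_mono (add_le_add_right key _)
    _ = Amap^[n + 1] h z := half_add_self (hg.ne_bot z)

lemma iter_chain {T : X → Set (StrongDual ℝ X)} (hT : IsMaxMonotoneOp T)
    {h : X × StrongDual ℝ X → EReal} (hh : Inv T h) {m n : ℕ} (hmn : m ≤ n) (z : X × StrongDual ℝ X) :
    Amap^[n + 1] h z ≤ Amap^[m + 1] h z := by
  induction n with
  | zero => rw [Nat.le_zero.1 hmn]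
  | succ n ih =>
    rcases Nat.lt_or_ge m (n + 1) with hlt | hge
    · exact le_trans (iter_decreasing hT hh n z) (ih (Nat.lt_succ_iff.1 hlt))
    · rw [le_antisymm hmn hge]

end St11

/-- `(Aⁿh)* ∘ i ≤ A^∞ h ≤ Aⁿh` for all `n ≥ 1`, and
`dom(A^∞ h) = dom(h) ∩ dom(h* ∘ i)`. -/
theorem statement11 (T : X → Set (StrongDual ℝ X)) (hT : IsMaxMonotoneOp T)
    (h : X × StrongDual ℝ X → EReal) (hF : InFitzFamily T h) (hproper : EProper h) :
    (∀ z : X × StrongDual ℝ X, ∀ n : ℕ, 1 ≤ n →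
        conjI (Amap^[n] h) z ≤ AinfMap h z ∧ AinfMap h z ≤ Amap^[n] h z) ∧
      {z : X × StrongDual ℝ X | AinfMap h z ≠ ⊤} =
        {z | h z ≠ ⊤} ∩ {z | conjI h z ≠ ⊤} := by
  have hh : St11.Inv T h := ⟨hF.2.1, hF.2.2.1, hF.2.2.2⟩
  obtain ⟨x₀, p₀, h₀⟩ := St11.graph_nonempty hT
  have hcne : ∀ z, conjI h z ≠ ⊥ := St11.conjI_ne_bot (hh.gph x₀ p₀ h₀)
  have hiter_ne_bot : ∀ k z, Amap^[k] h z ≠ ⊥ := fun k z =>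
    (St11.inv_iter hT hh k).ne_bot z
  have hciter_ne_bot : ∀ k z, conjI (Amap^[k] h) z ≠ ⊥ := fun k z =>
    St11.conjI_ne_bot ((St11.inv_iter hT hh k).gph x₀ p₀ h₀) z
  have hstep : ∀ k z, Amap^[k + 1] h z
      = (((1:ℝ)/2:ℝ) : EReal) * (Amap^[k] h z + conjI (Amap^[k] h) z) := by
    intro k z
    rw [Function.iterate_succ_apply']
    rfl
  constructor
  · intro z n hn
    obtain ⟨m, rfl⟩ : ∃ m, n = m + 1 := ⟨n - 1, (Nat.succ_pred_eq_of_pos hn).symm⟩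
    constructor
    · refine le_iInf fun k => ?_
      rcases le_or_gt m k with hmk | hkm
      · exact le_trans
          (St11.conjI_anti (fun w => St11.iter_chain hT hh hmk w) z)
          (St11.conjI_iter_le hT hh k z)
      · exact le_trans (St11.conjI_iter_le hT hh m z)
          (St11.iter_chain hT hh hkm.le z)
    · exact iInf_le (fun k => Amap^[k + 1] h z) m
  · ext z
    simp only [Set.mem_setOf_eq, Set.mem_inter_iff]
    have hsplit : ∀ k, Amap^[k + 1] h z ≠ ⊤ →
        Amap^[k] h z ≠ ⊤ ∧ conjI (Amap^[k] h) z ≠ ⊤ := by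
      intro k hk
      rw [hstep k z] at hk
      have hsum : Amap^[k] h z + conjI (Amap^[k] h) z ≠ ⊤ := by
        intro hcon
        exact hk (St11.half_eq_top_iff.2 hcon)
      exact ⟨St11.add_ne_top_left (hciter_ne_bot k z) hsum,
        St11.add_ne_top_right (hiter_ne_bot k z) hsum⟩
    constructor
    · intro hA
      have hex : ∃ n, Amap^[n + 1] h z ≠ ⊤ := by
        by_contra hc
        push_neg at hc
        exact hA (iInf_eq_top.2 hc)
      obtain ⟨n, hn⟩ := hex
      have hdown : ∀ k, Amap^[k + 1] h z ≠ ⊤ → Amap^[0 + 1] h z ≠ ⊤ := by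
        intro k
        induction k with
        | zero => exact id
        | succ k ih => exact fun hk => ih (hsplit (k + 1) hk).1
      have h1 := hsplit 0 (hdown n hn)
      simpa using h1
    · rintro ⟨h1, h2⟩
      have hA1 : Amap^[0 + 1] h z ≠ ⊤ := by
        rw [hstep 0 z]
        obtain ⟨r, hr⟩ := St11.exists_real (hh.ne_bot z) (by simpa using h1)
        obtain ⟨s, hs⟩ := St11.exists_real (hcne z) (by simpa using h2)
        rw [show Amap^[0] h z = h z from rfl, show conjI (Amap^[0] h) z = conjI h z from rfl,
          hr, hs, ← EReal.coe_add, ← EReal.coe_mul]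
        exact EReal.coe_ne_top _
      have hle : AinfMap h z ≤ Amap^[0 + 1] h z :=
        iInf_le (fun k => Amap^[k + 1] h z) 0
      exact (hle.trans_lt hA1.lt_top).ne
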